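/- Fix n ≥ 2. Let P_n(R) denote the set of monic polynomials p ∈ ℤ[X] of degree n that have a real root λ with 1 < λ ≤ R such that every other complex root μ of p satisfies |μ| < λ. Then there is a constant c > 0 (depending only on n) such that |P_n(R)| ≥ c · R^{n(n+1)/2} for all sufficiently large R. -/

import Mathlib

open Polynomial

/-- The family of polynomials used in the construction. -/
noncomputable def Pa (n : ℕ) (a : Fin n → ℤ) : Polynomial ℤ :=
  X ^ n - ∑ i : Fin n, C (a i) * X ^ (i : ℕ)

lemma aeval_Pa {S : Type*} [CommRing S] (n : ℕ) (a : Fin n → ℤ) (x : S) :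
    aeval x (Pa n a) = x ^ n - ∑ i : Fin n, (a i : S) * x ^ (i : ℕ) := by
  simp [Pa]

lemma aeval_deriv_Pa (n : ℕ) (a : Fin n → ℤ) (x : ℝ) :
    aeval x (derivative (Pa n a)) =
      n * x ^ (n - 1) - ∑ i : Fin n, (a i : ℝ) * ((i : ℕ) * x ^ ((i : ℕ) - 1)) := by
  simp [Pa, derivative_sub, derivative_sum, derivative_C_mul, derivative_X_pow]

/-- Monotonicity of `x ↦ x^n - ∑ bᵢ xⁱ` past a point where it is nonnegative. -/
lemma key_mono {n : ℕ} (hn : 1 ≤ n) (b : Fin n → ℝ) (hb : ∀ i, 0 < b i)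
    {x y : ℝ} (hx : 0 < x) (hxy : x < y)
    (h : 0 ≤ x ^ n - ∑ i : Fin n, b i * x ^ (i : ℕ)) :
    0 < y ^ n - ∑ i : Fin n, b i * y ^ (i : ℕ) := by
  have hy : 0 < y := hx.trans hxy
  have ht : 1 < y / x := (one_lt_div hx).2 hxy
  have hsum : ∑ i : Fin n, b i * y ^ (i : ℕ) < (y / x) ^ n * ∑ i : Fin n, b i * x ^ (i : ℕ) := by
    rw [Finset.mul_sum]
    apply Finset.sum_lt_sum_of_nonempty
    · exact Finset.univ_nonempty_iff.2 ⟨⟨0, hn⟩⟩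
    · intro i _
      have hin : (i : ℕ) < n := i.2
      have : y ^ (i : ℕ) = (y / x) ^ (i : ℕ) * x ^ (i : ℕ) := by
        rw [div_pow, div_mul_cancel₀]
        positivity
      rw [this]
      have hlt : (y / x) ^ (i : ℕ) < (y / x) ^ n := pow_lt_pow_right₀ ht hin
      have hpos : 0 < b i * x ^ (i : ℕ) := mul_pos (hb i) (pow_pos hx _)
      nlinarith [hlt, hpos]
  have hyx : y ^ n = (y / x) ^ n * x ^ n := by
    rw [div_pow, div_mul_cancel₀]; positivity
  nlinarith [pow_pos (div_pos hy hx) n, pow_pos hx n]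

lemma deriv_pos {n : ℕ} (hn : 1 ≤ n) (a : Fin n → ℤ) (ha : ∀ i, 1 ≤ a i)
    {l : ℝ} (hl : 0 < l) (hroot : l ^ n = ∑ i : Fin n, (a i : ℝ) * l ^ (i : ℕ)) :
    0 < aeval l (derivative (Pa n a)) := by
  rw [aeval_deriv_Pa]
  have hterm : ∀ i : Fin n, (a i : ℝ) * ((i : ℕ) * l ^ ((i : ℕ) - 1)) * l
      = (a i : ℝ) * (i : ℕ) * l ^ (i : ℕ) := by
    intro i
    rcases Nat.eq_zero_or_pos (i : ℕ) with h | h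
    · simp [h]
    · have hsucc : ((i : ℕ) - 1) + 1 = (i : ℕ) := Nat.succ_pred_eq_of_pos h
      have : l ^ ((i : ℕ) - 1) * l = l ^ (i : ℕ) := by rw [← pow_succ, hsucc]
      calc (a i : ℝ) * ((i : ℕ) * l ^ ((i : ℕ) - 1)) * l
          = (a i : ℝ) * (i : ℕ) * (l ^ ((i : ℕ) - 1) * l) := by ring
        _ = (a i : ℝ) * (i : ℕ) * l ^ (i : ℕ) := by rw [this]
  have hln : l ^ (n - 1) * l = l ^ n := by
    rw [← pow_succ, Nat.sub_add_cancel hn]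
  have key : 0 < (n * l ^ (n - 1) - ∑ i : Fin n, (a i : ℝ) * ((i : ℕ) * l ^ ((i : ℕ) - 1))) * l := by
    have hexp : (n * l ^ (n - 1) - ∑ i : Fin n, (a i : ℝ) * ((i : ℕ) * l ^ ((i : ℕ) - 1))) * l
        = ∑ i : Fin n, ((n : ℝ) - (i : ℕ)) * ((a i : ℝ) * l ^ (i : ℕ)) := by
      rw [sub_mul, Finset.sum_mul]
      rw [Finset.sum_congr rfl fun i _ => hterm i]
      have : (n : ℝ) * l ^ (n - 1) * l = n * l ^ n := by
        rw [mul_assoc, hln]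
      rw [this, hroot, Finset.mul_sum, ← Finset.sum_sub_distrib]
      exact Finset.sum_congr rfl fun i _ => by ring
    rw [hexp]
    apply Finset.sum_pos
    · intro i _
      have h1 : (0:ℝ) < (n : ℝ) - (i : ℕ) := by
        have h := i.2
        have : ((i : ℕ) : ℝ) < (n : ℝ) := by exact_mod_cast h
        linarith
      have h2 : (0:ℝ) < (a i : ℝ) := by exact_mod_cast lt_of_lt_of_le one_pos (by exact_mod_cast ha i)
      positivity
    · exact Finset.univ_nonempty_iff.2 ⟨⟨0, hn⟩⟩
  nlinarith [key, hl]

lemma degree_sum_lt (n : ℕ) (hn : 1 ≤ n) (a : Fin n → ℤ) :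
    (∑ i : Fin n, C (a i) * X ^ (i : ℕ)).degree < ((n : ℕ) : WithBot ℕ) := by
  apply lt_of_le_of_lt (Polynomial.degree_sum_le _ _)
  rw [Finset.sup_lt_iff (by exact_mod_cast WithBot.bot_lt_coe (n:ℕ))]
  intro i _
  apply lt_of_le_of_lt (Polynomial.degree_C_mul_X_pow_le _ _)
  exact_mod_cast i.2

lemma monic_Pa {n : ℕ} (hn : 1 ≤ n) (a : Fin n → ℤ) : (Pa n a).Monic := by
  have := degree_sum_lt n hn a
  exact monic_X_pow_sub this

lemma natDegree_Pa {n : ℕ} (hn : 1 ≤ n) (a : Fin n → ℤ) : (Pa n a).natDegree = n := by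
  have h := degree_sum_lt n hn a
  have : (Pa n a).degree = n := by
    unfold Pa
    rw [degree_sub_eq_left_of_degree_lt]
    · exact degree_X_pow n
    · rwa [degree_X_pow]
  exact natDegree_eq_of_degree_eq_some this

lemma coeff_Pa {n : ℕ} (a : Fin n → ℤ) (i : Fin n) :
    (Pa n a).coeff (i : ℕ) = -(a i) := by
  unfold Pa
  rw [coeff_sub, coeff_X_pow, finset_sum_coeff]
  have hne : ¬ (i : ℕ) = n := Nat.ne_of_lt i.2
  simp only [coeff_C_mul, coeff_X_pow]
  rw [Finset.sum_eq_single i]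
  · simp [hne]
  · intro j _ hji
    have : ¬ ((i:ℕ) = (j:ℕ)) := fun h => hji (Fin.ext h.symm)
    simp [this]
  · simp

lemma Pa_injective {n : ℕ} : Function.Injective (Pa n) := by
  intro a b hab
  funext i
  have := congrArg (fun p => Polynomial.coeff p (i : ℕ)) hab
  simp only [coeff_Pa] at this
  linarith [neg_injective this]

lemma apos {n : ℕ} (a : Fin n → ℤ) (ha : ∀ i, 1 ≤ a i) :
    ∀ i, (0:ℝ) < (a i : ℝ) := by
  intro i; exact_mod_cast lt_of_lt_of_le one_pos (by exact_mod_cast ha i)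

lemma root_unique {n : ℕ} (hn : 2 ≤ n) (a : Fin n → ℤ) (ha : ∀ i, 1 ≤ a i)
    {l : ℝ} (hl : 0 < l) (hroot : l ^ n = ∑ i : Fin n, (a i : ℝ) * l ^ (i : ℕ))
    {x : ℝ} (hx : 0 < x)
    (hxroot : x ^ n = ∑ i : Fin n, (a i : ℝ) * x ^ (i : ℕ)) : x = l := by
  have hb := apos a ha
  rcases lt_trichotomy x l with h | h | h
  · exfalso
    have := key_mono (by omega) (fun i => (a i : ℝ)) hb hx h (by rw [hxroot]; simp)
    rw [hroot] at this; simp at this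
  · exact h
  · exfalso
    have := key_mono (by omega) (fun i => (a i : ℝ)) hb hl h (by rw [hroot]; simp)
    rw [hxroot] at this; simp at this

lemma abs_root_lt {n : ℕ} (hn : 2 ≤ n) (a : Fin n → ℤ) (ha : ∀ i, 1 ≤ a i)
    {l : ℝ} (hl : 0 < l) (hroot : l ^ n = ∑ i : Fin n, (a i : ℝ) * l ^ (i : ℕ))
    {μ : ℂ} (hμroot : μ ^ n = ∑ i : Fin n, (a i : ℂ) * μ ^ (i : ℕ))
    (hμne : μ ≠ (l : ℂ)) : ‖μ‖ < l := by
  have hb := apos a ha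
  by_cases hreal : ∃ r : ℝ, 0 ≤ r ∧ μ = (r : ℂ)
  · exfalso
    obtain ⟨r, hr0, rfl⟩ := hreal
    have hrroot : r ^ n = ∑ i : Fin n, (a i : ℝ) * r ^ (i : ℕ) := by
      have := hμroot
      push_cast at this
      exact_mod_cast this
    have hrpos : 0 < r := by
      rcases hr0.lt_or_eq with h | h
      · exact h
      · exfalso
        rw [← h] at hrroot
        have hz : (0:ℝ) ^ n = 0 := zero_pow (by omega)
        have hs : ∑ i : Fin n, (a i : ℝ) * (0:ℝ) ^ (i : ℕ) = (a ⟨0, by omega⟩ : ℝ) := by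
          rw [Finset.sum_eq_single (⟨0, by omega⟩ : Fin n)]
          · norm_num
          · intro j _ hj
            have hj0 : (j : ℕ) ≠ 0 := by
              simpa [Fin.ext_iff] using hj
            rw [zero_pow hj0, mul_zero]
          · simp
        rw [hz, hs] at hrroot
        exact absurd hrroot.symm (ne_of_gt (hb _))
    have := root_unique hn a ha hl hroot hrpos hrroot
    exact hμne (by rw [this])
  · set z0 : Fin n := ⟨0, by omega⟩ with hz0
    set z1 : Fin n := ⟨1, by omega⟩ with hz1
    set S : Finset (Fin n) := (Finset.univ.erase z0).erase z1 with hS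
    have hμ0 : μ ≠ 0 := fun h => hreal ⟨0, le_refl _, by simp [h]⟩
    have hz1mem : z1 ∈ Finset.univ.erase z0 :=
      Finset.mem_erase.2 ⟨by simp [hz0, hz1, Fin.ext_iff], Finset.mem_univ _⟩
    have hsplit : ∀ {M : Type} [AddCommMonoid M] (f : Fin n → M),
        ∑ i : Fin n, f i = f z0 + f z1 + ∑ i ∈ S, f i := by
      intro M _ f
      have e1 : ∑ i : Fin n, f i = f z0 + ∑ i ∈ Finset.univ.erase z0, f i :=
        (Finset.add_sum_erase _ f (Finset.mem_univ z0)).symm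
      have e2 : ∑ i ∈ Finset.univ.erase z0, f i = f z1 + ∑ i ∈ S, f i :=
        (Finset.add_sum_erase _ f hz1mem).symm
      rw [e1, e2, ← add_assoc]
    have ha0 : ((a z0 : ℂ)) ≠ 0 := by exact_mod_cast (hb z0).ne'
    have ha1 : ((a z1 : ℂ)) ≠ 0 := by exact_mod_cast (hb z1).ne'
    have hnotray : ¬ SameRay ℝ ((a z0 : ℂ)) ((a z1 : ℂ) * μ) := by
      intro hray
      obtain ⟨r, hr0, hr⟩ := hray.exists_nonneg_left ha0
      apply hreal
      refine ⟨r * (a z0 : ℝ) / (a z1 : ℝ),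
        div_nonneg (mul_nonneg hr0 (hb z0).le) (hb z1).le, ?_⟩
      have h2 : ((r * (a z0:ℝ) / (a z1:ℝ) : ℝ) : ℂ) = ((a z1:ℂ) * μ) / (a z1:ℂ) := by
        push_cast
        rw [← hr, Complex.real_smul]
      rw [h2]
      exact (mul_div_cancel_left₀ _ ha1).symm
    have hnormint : ∀ i : Fin n, ‖((a i : ℂ))‖ = (a i : ℝ) := by
      intro i
      have : ((a i : ℂ)) = (((a i : ℝ) : ℂ)) := by push_cast; rfl
      rw [this, Complex.norm_real, Real.norm_eq_abs, abs_of_pos (hb i)]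
    set m : ℝ := ‖μ‖ with hm
    have hmnorm : ∀ k : ℕ, ‖μ ^ k‖ = m ^ k := by
      intro k; rw [norm_pow, hm]
    have hmpos : 0 < m := by
      rw [hm]; exact norm_pos_iff.mpr hμ0
    have hstrict : ‖(a z0 : ℂ) * μ ^ (z0 : ℕ) + (a z1 : ℂ) * μ ^ (z1 : ℕ)‖
        < (a z0 : ℝ) * m ^ (z0 : ℕ) + (a z1 : ℝ) * m ^ (z1 : ℕ) := by
      have h1 : ((z0 : ℕ)) = 0 := rfl
      have h2 : ((z1 : ℕ)) = 1 := rfl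
      rw [h1, h2]
      simp only [pow_zero, pow_one, mul_one]
      exact (norm_add_lt_of_not_sameRay hnotray).trans_eq
        (by rw [norm_mul, hnormint, hnormint, hm])
    have habs : m ^ n < ∑ i : Fin n, (a i : ℝ) * m ^ (i : ℕ) := by
      calc m ^ n = ‖μ ^ n‖ := (hmnorm n).symm
        _ = ‖((a z0 : ℂ) * μ ^ (z0:ℕ) + (a z1 : ℂ) * μ ^ (z1:ℕ))
              + ∑ i ∈ S, (a i : ℂ) * μ ^ (i : ℕ)‖ := by
            rw [hμroot, hsplit (fun i => (a i : ℂ) * μ ^ (i : ℕ))]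
        _ ≤ ‖(a z0 : ℂ) * μ ^ (z0:ℕ) + (a z1 : ℂ) * μ ^ (z1:ℕ)‖
              + ∑ i ∈ S, ‖(a i : ℂ) * μ ^ (i : ℕ)‖ :=
            (norm_add_le _ _).trans (by gcongr; exact norm_sum_le _ _)
        _ < ((a z0 : ℝ) * m ^ (z0:ℕ) + (a z1 : ℝ) * m ^ (z1:ℕ))
              + ∑ i ∈ S, (a i : ℝ) * m ^ (i : ℕ) := by
            apply add_lt_add_of_lt_of_le hstrict
            apply le_of_eq
            apply Finset.sum_congr rfl
            intro i _
            rw [norm_mul, hnormint, hmnorm]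
        _ = ∑ i : Fin n, (a i : ℝ) * m ^ (i : ℕ) :=
            (hsplit (fun i => (a i : ℝ) * m ^ (i : ℕ))).symm
    by_contra hcon
    push_neg at hcon
    rcases hcon.lt_or_eq with h | h
    · have := key_mono (by omega) (fun i => (a i : ℝ)) hb hl h (by rw [hroot]; simp)
      linarith
    · rw [h] at hroot
      linarith

/-- The set of Perron polynomials of degree `n` with Perron root no larger than `R`:
monic integer polynomials of degree `n` with a real root `λ`, `1 < λ ≤ R`, such that every
other complex root (counted with multiplicity) has absolute value `< λ`. -/
noncomputable def perronPolys (n : ℕ) (R : ℝ) : Set (Polynomial ℤ) :=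
  {p | p.Monic ∧ p.natDegree = n ∧ ∃ l : ℝ, 1 < l ∧ l ≤ R ∧
    Polynomial.aeval l p = 0 ∧
    ∀ μ ∈ (p.aroots ℂ).erase (l : ℂ), ‖μ‖ < l}

lemma Pa_mem_perron {n : ℕ} (hn : 2 ≤ n) (a : Fin n → ℤ) (ha : ∀ i, 1 ≤ a i)
    {R : ℝ} (hR1 : 1 ≤ R)
    (haR : ∀ i : Fin n, (a i : ℝ) ≤ R ^ (n - (i:ℕ)) / n) :
    Pa n a ∈ perronPolys n R := by
  have hR0 : (0:ℝ) < R := lt_of_lt_of_le one_pos hR1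
  have hb := apos a ha
  set p := Pa n a with hp
  have hev1 : aeval (1:ℝ) p < 0 := by
    rw [hp, aeval_Pa]
    have hsum : (n:ℝ) ≤ ∑ i : Fin n, (a i : ℝ) * (1:ℝ) ^ (i:ℕ) := by
      calc (n:ℝ) = ∑ _i : Fin n, (1:ℝ) := by simp
        _ ≤ ∑ i : Fin n, (a i : ℝ) * (1:ℝ) ^ (i:ℕ) := by
            apply Finset.sum_le_sum
            intro i _
            rw [one_pow, mul_one]
            exact_mod_cast ha i
    have : (2:ℝ) ≤ (n:ℝ) := by exact_mod_cast hn
    simp only [one_pow, mul_one] at hsum ⊢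
    linarith
  have hevR : 0 ≤ aeval R p := by
    rw [hp, aeval_Pa]
    have hsum : ∑ i : Fin n, (a i : ℝ) * R ^ (i:ℕ) ≤ R ^ n := by
      calc ∑ i : Fin n, (a i : ℝ) * R ^ (i:ℕ)
          ≤ ∑ _i : Fin n, R ^ n / n := by
            apply Finset.sum_le_sum
            intro i _
            have h1 : (a i : ℝ) * R ^ (i:ℕ) ≤ (R ^ (n - (i:ℕ)) / n) * R ^ (i:ℕ) := by
              apply mul_le_mul_of_nonneg_right (haR i) (by positivity)
            apply h1.trans
            rw [div_mul_eq_mul_div, ← pow_add]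
            rw [Nat.sub_add_cancel i.2.le]
        _ = R ^ n := by
            rw [Finset.sum_const, Finset.card_univ, Fintype.card_fin, nsmul_eq_mul]
            field_simp
    linarith
  obtain ⟨l, hlmem, hleval⟩ : ∃ l ∈ Set.Ioc (1:ℝ) R, aeval l p = 0 := by
    have hcont : ContinuousOn (fun x : ℝ => aeval x p) (Set.Icc 1 R) :=
      (Polynomial.continuous_aeval p).continuousOn
    have h0mem : (0:ℝ) ∈ Set.Ioc (aeval (1:ℝ) p) (aeval R p) := ⟨hev1, hevR⟩
    obtain ⟨l, hl, hl0⟩ := intermediate_value_Ioc hR1 hcont h0mem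
    exact ⟨l, hl, hl0⟩
  obtain ⟨hl1, hlR⟩ := hlmem
  have hl0 : 0 < l := lt_trans one_pos hl1
  have hroot : l ^ n = ∑ i : Fin n, (a i : ℝ) * l ^ (i : ℕ) := by
    have := hleval
    rw [hp, aeval_Pa] at this
    linarith
  refine ⟨monic_Pa (by omega) a, natDegree_Pa (by omega) a, l, hl1, hlR, hleval, ?_⟩
  intro μ hμ
  have hpne : p ≠ 0 := (monic_Pa (by omega) a).ne_zero
  by_cases hμl : μ = (l : ℂ)
  · exfalso
    subst hμl
    have hq : (p.map (algebraMap ℤ ℂ)) ≠ 0 := ((monic_Pa (by omega) a).map _).ne_zero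
    have hmult : rootMultiplicity ((l:ℝ):ℂ) (p.map (algebraMap ℤ ℂ)) ≤ 1 := by
      by_contra hcon
      push_neg at hcon
      have hIsRoot : (p.map (algebraMap ℤ ℂ)).IsRoot ((l:ℝ):ℂ) := by
        rw [IsRoot, eval_map, ← aeval_def]
        have : (algebraMap ℝ ℂ) l = ((l:ℝ):ℂ) := rfl
        rw [← this, aeval_algebraMap_apply, hleval, map_zero]
      have h2 := derivative_rootMultiplicity_of_root hIsRoot
      have hge : 1 ≤ rootMultiplicity ((l:ℝ):ℂ) (derivative (p.map (algebraMap ℤ ℂ))) := by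
        omega
      have hd0 : (derivative (p.map (algebraMap ℤ ℂ))).IsRoot ((l:ℝ):ℂ) := by
        have := Polynomial.rootMultiplicity_pos'.mp (lt_of_lt_of_le one_pos hge)
        exact this.2
      have hderiv := deriv_pos (by omega) a ha hl0 hroot
      rw [IsRoot, derivative_map, eval_map, ← aeval_def] at hd0
      have : (algebraMap ℝ ℂ) l = ((l:ℝ):ℂ) := rfl
      rw [← this, aeval_algebraMap_apply] at hd0
      have : aeval l (derivative p) = 0 := by
        have h3 : ((aeval l (derivative p) : ℝ) : ℂ) = 0 := hd0
        exact_mod_cast h3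
      rw [this] at hderiv
      exact lt_irrefl 0 hderiv
    have hcount : ((p.aroots ℂ).erase ((l:ℝ):ℂ)).count ((l:ℝ):ℂ) = 0 := by
      classical
      rw [Multiset.count_erase_self, aroots_def, count_roots]
      omega
    have := Multiset.count_pos.mpr hμ
    rw [hcount] at this
    exact lt_irrefl 0 this
  · have hμar : μ ∈ p.aroots ℂ := Multiset.mem_of_mem_erase hμ
    have hμeval : aeval μ p = 0 := (mem_aroots'.mp hμar).2
    rw [hp, aeval_Pa] at hμeval
    have hμroot : μ ^ n = ∑ i : Fin n, (a i : ℂ) * μ ^ (i : ℕ) := by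
      linear_combination hμeval
    exact abs_root_lt hn a ha hl0 hroot hμroot hμl

lemma bounded_coeff_finite (n : ℕ) (B : ℝ) :
    {p : Polynomial ℤ | p.natDegree ≤ n ∧ ∀ i, |(p.coeff i : ℝ)| ≤ B}.Finite := by
  set s := {p : Polynomial ℤ | p.natDegree ≤ n ∧ ∀ i, |(p.coeff i : ℝ)| ≤ B}
  set f : Polynomial ℤ → (Fin (n+1) → ℤ) := fun p i => p.coeff i with hf
  have hinj : Set.InjOn f s := by
    intro p hp q hq hpq
    ext i
    by_cases hi : i ≤ n
    · exact congrFun hpq ⟨i, Nat.lt_succ_of_le hi⟩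
    · push_neg at hi
      rw [coeff_eq_zero_of_natDegree_lt (lt_of_le_of_lt hp.1 hi),
        coeff_eq_zero_of_natDegree_lt (lt_of_le_of_lt hq.1 hi)]
  apply Set.Finite.of_finite_image _ hinj
  apply Set.Finite.subset (Set.Finite.pi (fun _ : Fin (n+1) => Set.finite_Icc (-⌈B⌉) ⌈B⌉))
  rintro g ⟨p, hp, rfl⟩
  intro i _
  have := hp.2 i
  have h1 : (p.coeff i : ℝ) ≤ B := (abs_le.mp this).2
  have h2 : -B ≤ (p.coeff i : ℝ) := (abs_le.mp this).1
  constructor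
  · have : (-⌈B⌉ : ℝ) ≤ (p.coeff i : ℝ) := le_trans (by push_cast; linarith [Int.le_ceil B]) h2
    exact_mod_cast this
  · have : (p.coeff i : ℝ) ≤ (⌈B⌉ : ℝ) := h1.trans (Int.le_ceil B)
    exact_mod_cast this

lemma perron_finite (n : ℕ) (R : ℝ) : (perronPolys n R).Finite := by
  apply Set.Finite.subset (bounded_coeff_finite n ((max R 1) ^ n * (n.choose (n / 2))))
  rintro p ⟨hmonic, hdeg, l, hl1, hlR, hleval, hroots⟩
  constructor
  · exact hdeg.le
  · intro i
    set q : Polynomial ℚ := p.map (Int.castRingHom ℚ) with hqdef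
    have hqmonic : q.Monic := hmonic.map _
    have hqmap : q.map (algebraMap ℚ ℂ) = p.map (algebraMap ℤ ℂ) := by
      rw [hqdef, map_map]
      congr 1
    have hqdeg : q.natDegree = p.natDegree := by
      rw [hqdef]
      exact natDegree_map_eq_of_injective (Int.cast_injective) p
    have hsplits : Splits (q.map (algebraMap ℚ ℂ)) := IsAlgClosed.splits _
    have hbound : ∀ z ∈ (p.map (algebraMap ℤ ℂ)).roots, ‖z‖ ≤ R := by
      intro z hz
      by_cases hzl : z = ((l:ℝ):ℂ)
      · rw [hzl, Complex.norm_real, Real.norm_eq_abs, abs_of_pos (lt_trans one_pos hl1)]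
        exact hlR
      · have hz' : z ∈ (p.aroots ℂ).erase ((l:ℝ):ℂ) := by
          rw [aroots_def] at *
          exact Multiset.mem_erase_of_ne hzl |>.mpr hz
        have := hroots z hz'
        exact le_trans this.le hlR
    have hbound' : ∀ z ∈ (q.map (algebraMap ℚ ℂ)).roots, ‖z‖ ≤ R := by
      rw [hqmap]; exact hbound
    have hb := coeff_bdd_of_roots_le (algebraMap ℚ ℂ) hqmonic hsplits
      (by rw [hqdeg, hdeg]) hbound' i
    rw [hqmap, coeff_map] at hb
    have : ‖(algebraMap ℤ ℂ) (p.coeff i)‖ = |(p.coeff i : ℝ)| := by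
      have h1 : ((algebraMap ℤ ℂ) (p.coeff i)) = (((p.coeff i : ℝ)) : ℂ) := by
        push_cast; rfl
      rw [h1, Complex.norm_real, Real.norm_eq_abs]
    rw [this] at hb
    exact hb

lemma sum_range_sub_twice (n : ℕ) : (∑ i ∈ Finset.range n, (n - i)) * 2 = n * (n + 1) := by
  induction n with
  | zero => simp
  | succ n ih =>
    have h : ∑ i ∈ Finset.range (n+1), (n + 1 - i)
        = (∑ i ∈ Finset.range n, (n - i)) + (n + 1) := by
      rw [Finset.sum_range_succ' (fun i => n + 1 - i) n]
      simp
    rw [h, add_mul, ih]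
    ring

lemma sum_range_sub (n : ℕ) : (∑ i ∈ Finset.range n, (n - i)) = n * (n + 1) / 2 := by
  have := sum_range_sub_twice n
  omega

/-- `|P_n(R)| ≥ c · R^(n(n+1)/2)` for all sufficiently large `R`. -/
theorem perronPolys_card_ge (n : ℕ) (hn : 2 ≤ n) :
    ∃ c : ℝ, 0 < c ∧ ∀ᶠ R : ℝ in Filter.atTop,
      c * R ^ (n * (n + 1) / 2) ≤ ((perronPolys n R).ncard : ℝ) := by
  have hn0 : 0 < n := by omega
  refine ⟨1 / (2 * n) ^ n, by positivity, ?_⟩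
  rw [Filter.eventually_atTop]
  refine ⟨2 * n, fun R hR => ?_⟩
  have hn2 : (2:ℝ) ≤ (n:ℝ) := by exact_mod_cast hn
  have hR4 : (4:ℝ) ≤ R := by linarith
  have hR1 : (1:ℝ) ≤ R := by linarith
  have hR0 : (0:ℝ) < R := by linarith
  set M : Fin n → ℤ := fun i => ⌊R ^ (n - (i:ℕ)) / n⌋ with hM
  have hxge2 : ∀ i : Fin n, (2:ℝ) ≤ R ^ (n - (i:ℕ)) / n := by
    intro i
    rw [le_div_iff₀ (by positivity)]
    calc (2:ℝ) * n ≤ R := hR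
      _ = R ^ 1 := (pow_one R).symm
      _ ≤ R ^ (n - (i:ℕ)) := pow_le_pow_right₀ hR1 (by omega)
  have hM1 : ∀ i, 1 ≤ M i := by
    intro i
    rw [hM, Int.le_floor]
    exact le_trans (by norm_num) (hxge2 i)
  set F : Finset (Fin n → ℤ) := Fintype.piFinset (fun i => Finset.Icc 1 (M i)) with hF
  have hmem : ∀ a ∈ F, (∀ i, 1 ≤ a i) ∧ (∀ i, (a i : ℝ) ≤ R ^ (n - (i:ℕ)) / n) := by
    intro a haF
    rw [hF, Fintype.mem_piFinset] at haF
    constructor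
    · exact fun i => (Finset.mem_Icc.mp (haF i)).1
    · intro i
      have := (Finset.mem_Icc.mp (haF i)).2
      exact Int.le_floor.mp this
  have hsub : ↑(F.image (Pa n)) ⊆ perronPolys n R := by
    intro p hp
    rw [Finset.coe_image] at hp
    obtain ⟨a, haF, rfl⟩ := hp
    obtain ⟨h1, h2⟩ := hmem a haF
    exact Pa_mem_perron hn a h1 hR1 h2
  have hcard1 : (F.image (Pa n)).card = F.card := Finset.card_image_of_injective _ Pa_injective
  have hineq : (F.card : ℝ) ≤ ((perronPolys n R).ncard : ℝ) := by
    have := Set.ncard_le_ncard hsub (perron_finite n R)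
    rw [Set.ncard_coe_finset, hcard1] at this
    exact_mod_cast this
  have hcard2 : (F.card : ℝ) = ∏ i : Fin n, ((M i).toNat : ℝ) := by
    rw [hF, Fintype.card_piFinset]
    push_cast
    apply Finset.prod_congr rfl
    intro i _
    rw [Int.card_Icc]
    simp
  have hprod : ∏ i : Fin n, (R ^ (n - (i:ℕ)) / n / 2) ≤ (F.card : ℝ) := by
    rw [hcard2]
    apply Finset.prod_le_prod
    · intro i _
      have := hxge2 i
      positivity
    · intro i _
      have h2 : ((M i).toNat : ℝ) = ((M i : ℤ) : ℝ) := by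
        have h3 := Int.toNat_of_nonneg (le_trans zero_le_one (hM1 i))
        exact_mod_cast congrArg (Int.cast : ℤ → ℝ) h3
      rw [h2]
      have hfl : R ^ (n - (i:ℕ)) / n - 1 < ((M i : ℤ) : ℝ) := Int.sub_one_lt_floor _
      have := hxge2 i
      linarith
  have hprodeq : ∏ i : Fin n, (R ^ (n - (i:ℕ)) / n / 2)
      = R ^ (n * (n + 1) / 2) / (2 * n) ^ n := by
    have h1 : ∀ i : Fin n, R ^ (n - (i:ℕ)) / n / 2 = R ^ (n - (i:ℕ)) / (2 * n) := by
      intro i; field_simp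
    rw [Finset.prod_congr rfl (fun i _ => h1 i), Finset.prod_div_distrib]
    rw [Finset.prod_const, Finset.card_univ, Fintype.card_fin]
    congr 1
    rw [Finset.prod_pow_eq_pow_sum]
    congr 1
    rw [Fin.sum_univ_eq_sum_range (fun i => n - i) n]
    exact sum_range_sub n
  have hfinal : 1 / (2 * (n:ℝ)) ^ n * R ^ (n * (n + 1) / 2) ≤ (F.card : ℝ) := by
    have he : 1 / (2 * (n:ℝ)) ^ n * R ^ (n * (n + 1) / 2)
        = R ^ (n * (n + 1) / 2) / (2 * (n:ℝ)) ^ n := by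
      field_simp
    rw [he, ← hprodeq]
    exact hprod
  calc 1 / (2 * (n:ℝ)) ^ n * R ^ (n * (n + 1) / 2) ≤ (F.card : ℝ) := by
        exact_mod_cast hfinal
    _ ≤ ((perronPolys n R).ncard : ℝ) := hineq
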